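/- A coordinate set I is sufficient if and only if I contains every relevant coordinate, where coordinate i is relevant if there exist states s, s' differing only at coordinate i with Opt(s) ≠ Opt(s'). -/
import Mathlib


/-- The set of optimal actions at state `s`. -/
def Opt {A : Type} [Fintype A] {S : Type} (U : A → S → ℚ) (s : S) : Set A :=
  {a | ∀ b, U b s ≤ U a s}

/-- A coordinate set `I` is sufficient if states agreeing on `I` have equal optimal sets. -/
def Sufficient {A : Type} [Fintype A] {n : ℕ} {X : Fin n → Type}
    (U : A → (∀ i, X i) → ℚ) (I : Finset (Fin n)) : Prop :=
  ∀ s s' : ∀ i, X i, (∀ i ∈ I, s i = s' i) → Opt U s = Opt U s'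

/-- Coordinate `i` is relevant if two states differing only at `i` have different optimal sets. -/
def Relevant {A : Type} [Fintype A] {n : ℕ} {X : Fin n → Type}
    (U : A → (∀ i, X i) → ℚ) (i : Fin n) : Prop :=
  ∃ s s' : ∀ j, X j, (∀ j, j ≠ i → s j = s' j) ∧ Opt U s ≠ Opt U s'

theorem sufficient_iff_contains_relevant {A : Type} [Fintype A] {n : ℕ} {X : Fin n → Type}
    [∀ i, Fintype (X i)] [∀ i, Nonempty (X i)]
    (U : A → (∀ i, X i) → ℚ) (I : Finset (Fin n)) :
    Sufficient U I ↔ ∀ i : Fin n, Relevant U i → i ∈ I := by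
  classical
  constructor
  · intro hS i hrel
    by_contra hiI
    obtain ⟨s, s', hdiff, hne⟩ := hrel
    exact hne (hS s s' (fun j hj => hdiff j (fun h => hiI (h ▸ hj))))
  · intro hrel
    have key : ∀ (k : ℕ) (s s' : ∀ i, X i), (∀ i ∈ I, s i = s' i) →
        (Finset.univ.filter (fun j => s j ≠ s' j)).card ≤ k → Opt U s = Opt U s' := by
      intro k
      induction k with
      | zero =>
        intro s s' _ hcard
        have : s = s' := by
          funext j
          by_contra h
          have : j ∈ Finset.univ.filter (fun j => s j ≠ s' j) := by simp [h]
          have := Finset.card_pos.mpr ⟨j, this⟩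
          omega
        rw [this]
      | succ k ih =>
        intro s s' hagree hcard
        by_cases hD : (Finset.univ.filter (fun j => s j ≠ s' j)) = ∅
        · have : s = s' := by
            funext j
            by_contra h
            have : j ∈ Finset.univ.filter (fun j => s j ≠ s' j) := by simp [h]
            rw [hD] at this
            exact absurd this (Finset.notMem_empty j)
          rw [this]
        · obtain ⟨j, hj⟩ := Finset.nonempty_iff_ne_empty.mpr hD
          have hjne : s j ≠ s' j := (Finset.mem_filter.mp hj).2
          have hjI : j ∉ I := fun h => hjne (hagree j h)
          have hjrel : ¬ Relevant U j := fun h => hjI (hrel j h)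
          rw [Relevant] at hjrel
          push_neg at hjrel
          set t : ∀ i, X i := Function.update s' j (s j) with ht
          have htj : t j = s j := Function.update_self j (s j) s'
          have htm : ∀ m, m ≠ j → t m = s' m := fun m hm =>
            Function.update_of_ne hm (s j) s'
          have h1 : Opt U s = Opt U t := by
            apply ih s t
            · intro i hi
              rw [htm i (fun h => hjI (h ▸ hi)), hagree i hi]
            · have hsub : (Finset.univ.filter (fun m => s m ≠ t m)) ⊆
                  (Finset.univ.filter (fun m => s m ≠ s' m)).erase j := by
                intro m hm
                rw [Finset.mem_filter] at hm
                have hmj : m ≠ j := fun h => hm.2 (h ▸ htj.symm)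
                refine Finset.mem_erase.mpr ⟨hmj, Finset.mem_filter.mpr ⟨Finset.mem_univ m, ?_⟩⟩
                rw [← htm m hmj]; exact hm.2
              calc (Finset.univ.filter (fun m => s m ≠ t m)).card
                  ≤ ((Finset.univ.filter (fun m => s m ≠ s' m)).erase j).card :=
                    Finset.card_le_card hsub
                _ ≤ k := by
                    have := Finset.card_erase_of_mem hj
                    omega
          have h2 : Opt U t = Opt U s' := by
            by_contra h
            exact h (hjrel t s' (fun m hm => htm m hm))
          rw [h1, h2]
    intro s s' hagree
    exact key (Finset.univ.filter (fun j => s j ≠ s' j)).card s s' hagree le_rfl
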